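/- Fix an integer k ≥ 2, let φ_k^min = arccos(1 − (2 − 2cos(π/(2k+1)))/(1 − cos(π/(2k−1)))), and let λ₁ = sin²(π/(4k−2)) be the right endpoint of Λ_k. Then the function φ ↦ P_k^φ(λ₁) is strictly decreasing on (φ_k^min, π], and P_k^φ(λ₁) tends to 1 as φ tends to φ_k^min from the right. -/

import Mathlib

/-- The success probability `P_k^φ(λ)` of the matched-phase Grover algorithm after
`k` iterations: `P_k^φ(λ) = A·cos((2k+1)δ) + B` where `θ = arcsin √λ`,
`δ = arccos (1 − λ(1 − cos φ))`, `A = (sin²θ/sin²δ)(cos φ − cos δ)` and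
`B = (sin²θ/sin²δ)(1 − cos φ·cos δ)`. -/
noncomputable def grovP (k : ℕ) (φ lam : ℝ) : ℝ :=
  let θ : ℝ := Real.arcsin (Real.sqrt lam)
  let δ : ℝ := Real.arccos (1 - lam * (1 - Real.cos φ))
  let A : ℝ := Real.sin θ ^ 2 / Real.sin δ ^ 2 * (Real.cos φ - Real.cos δ)
  let B : ℝ := Real.sin θ ^ 2 / Real.sin δ ^ 2 * (1 - Real.cos φ * Real.cos δ)
  A * Real.cos ((2 * (k : ℝ) + 1) * δ) + B

/-- `φ_k^min = arccos(1 − (2 − 2cos(π/(2k+1)))/(1 − cos(π/(2k−1))))`. -/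
noncomputable def phiMin (k : ℕ) : ℝ :=
  Real.arccos (1 - (2 - 2 * Real.cos (Real.pi / (2 * (k : ℝ) + 1))) /
    (1 - Real.cos (Real.pi / (2 * (k : ℝ) - 1))))

/-- Closed form for `grovP` when the denominators are nonzero. -/
lemma grovP_formula (k : ℕ) (φ lam : ℝ) (hl0 : 0 < lam) (hl1 : lam < 1)
    (hφ : Real.cos φ < 1) :
    grovP k φ lam = 1 - (1 - lam) *
      (1 + Real.cos ((2 * (k : ℝ) + 1) * Real.arccos (1 - lam * (1 - Real.cos φ)))) /
      (1 + (1 - lam * (1 - Real.cos φ))) := by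
  have hcb : -1 ≤ Real.cos φ := Real.neg_one_le_cos φ
  set x : ℝ := 1 - lam * (1 - Real.cos φ) with hxdef
  have hx1 : x < 1 := by
    have : 0 < lam * (1 - Real.cos φ) := by
      apply mul_pos hl0; linarith
    simp only [hxdef]; linarith
  have hx2 : -1 < x := by
    have h1 : lam * (1 - Real.cos φ) ≤ lam * 2 :=
      mul_le_mul_of_nonneg_left (by linarith) hl0.le
    simp only [hxdef]; linarith
  have hcos : Real.cos (Real.arccos x) = x := Real.cos_arccos hx2.le hx1.le
  have hsinsq : Real.sin (Real.arccos x) ^ 2 = 1 - x ^ 2 := by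
    rw [Real.sin_arccos, Real.sq_sqrt]
    nlinarith [mul_pos (sub_pos.mpr hx1) (by linarith : (0:ℝ) < 1 + x)]
  have hθ : Real.sin (Real.arcsin (Real.sqrt lam)) ^ 2 = lam := by
    rw [Real.sin_arcsin (by have := Real.sqrt_nonneg lam; linarith)
      (by rw [show (1:ℝ) = Real.sqrt 1 by simp]; exact Real.sqrt_le_sqrt hl1.le),
      Real.sq_sqrt hl0.le]
  simp only [grovP]
  rw [hθ, hcos, hsinsq]
  set C : ℝ := Real.cos ((2 * (k : ℝ) + 1) * Real.arccos x)
  have h1 : (1:ℝ) - x ≠ 0 := by intro h; apply absurd hx1; simp; linarith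
  have h2 : (1:ℝ) + x ≠ 0 := by intro h; apply absurd hx2; simp; linarith
  have hsq : 1 - x ^ 2 ≠ 0 := by
    intro h; apply h1; nlinarith [sq_nonneg (1 + x), sq_nonneg (1 - x)]
  field_simp
  rw [hxdef]
  ring

/-- The core monotonicity fact about `δ ↦ (1 + cos((2k+1)δ))/(1 + cos δ)`. -/
lemma ratio_strict_mono (k : ℕ) (hk : 2 ≤ k) {δ1 δ2 : ℝ}
    (h1 : Real.pi / (2 * (k : ℝ) + 1) < δ1) (h12 : δ1 < δ2)
    (h2 : δ2 ≤ Real.pi / (2 * (k : ℝ) - 1)) :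
    (1 + Real.cos ((2 * (k : ℝ) + 1) * δ1)) / (1 + Real.cos δ1) <
      (1 + Real.cos ((2 * (k : ℝ) + 1) * δ2)) / (1 + Real.cos δ2) := by
  have hK : (2:ℝ) ≤ (k : ℝ) := by exact_mod_cast hk
  have hπ := Real.pi_pos
  have hM : (0:ℝ) < 2 * (k:ℝ) + 1 := by linarith
  have hm : (0:ℝ) < 2 * (k:ℝ) - 1 := by linarith
  -- bounds on δ's
  have hδ1pos : 0 < δ1 := lt_trans (by positivity) h1
  have hδ2b : δ2 ≤ Real.pi / 3 := by
    refine le_trans h2 ?_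
    apply div_le_div_of_nonneg_left hπ.le (by norm_num)
    linarith
  -- half angles of (2k+1)δ in (π/2, π)
  have hA1 : Real.pi / 2 < (2 * (k:ℝ) + 1) * δ1 / 2 := by
    have := (div_lt_iff₀ hM).mp h1
    linarith
  have hA2 : (2 * (k:ℝ) + 1) * δ2 / 2 < Real.pi := by
    have h2' : (2 * (k:ℝ) + 1) * δ2 ≤ (2 * (k:ℝ) + 1) * (Real.pi / (2 * (k:ℝ) - 1)) :=
      mul_le_mul_of_nonneg_left h2 hM.le
    have : (2 * (k:ℝ) + 1) * (Real.pi / (2 * (k:ℝ) - 1)) < 2 * Real.pi := by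
      rw [mul_div_assoc', div_lt_iff₀ hm]
      nlinarith
    linarith
  have hA12 : (2 * (k:ℝ) + 1) * δ1 / 2 < (2 * (k:ℝ) + 1) * δ2 / 2 := by
    have := mul_lt_mul_of_pos_left h12 hM
    linarith
  -- rewrite using half-angle formula
  have half : ∀ t : ℝ, 1 + Real.cos t = 2 * Real.cos (t / 2) ^ 2 := by
    intro t
    have := Real.cos_sq (t / 2)
    have ht : 2 * (t / 2) = t := by ring
    rw [ht] at this
    linarith
  rw [half ((2 * (k:ℝ) + 1) * δ1), half ((2 * (k:ℝ) + 1) * δ2), half δ1, half δ2]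
  set N1 := Real.cos ((2 * (k:ℝ) + 1) * δ1 / 2)
  set N2 := Real.cos ((2 * (k:ℝ) + 1) * δ2 / 2)
  set D1 := Real.cos (δ1 / 2)
  set D2 := Real.cos (δ2 / 2)
  have hN1neg : N1 < 0 :=
    Real.cos_neg_of_pi_div_two_lt_of_lt hA1 (by linarith)
  have hN21 : N2 < N1 := by
    apply Real.strictAntiOn_cos ⟨by linarith, by linarith⟩ ⟨by linarith, by linarith⟩ hA12
  have hD2pos : 0 < D2 :=
    Real.cos_pos_of_mem_Ioo ⟨by linarith, by linarith⟩
  have hD12 : D2 < D1 := by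
    apply Real.strictAntiOn_cos ⟨by linarith, by linarith⟩ ⟨by linarith, by linarith⟩
    linarith
  have hD1pos : 0 < D1 := lt_trans hD2pos hD12
  rw [div_lt_div_iff₀ (by positivity) (by positivity)]
  have hN : N1 ^ 2 < N2 ^ 2 := by nlinarith
  have hD : D2 ^ 2 ≤ D1 ^ 2 := by nlinarith
  have e1 := mul_lt_mul_of_pos_right hN (by positivity : (0:ℝ) < D2 ^ 2)
  have e2 := mul_le_mul_of_nonneg_left hD (sq_nonneg N2)
  nlinarith

set_option maxHeartbeats 1600000 in
/-- For k ≥ 2 and λ₁ = sin²(π/(4k−2)), the function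
φ ↦ P_k^φ(λ₁) is strictly decreasing on (φ_k^min, π], and P_k^φ(λ₁) → 1 as
φ → φ_k^min from the right. -/
theorem right_endpoint_probability_decreasing_in_phase
    (k : ℕ) (hk : 2 ≤ k) (lam₁ : ℝ)
    (hlam₁ : lam₁ = Real.sin (Real.pi / (4 * (k : ℝ) - 2)) ^ 2) :
    StrictAntiOn (fun φ => grovP k φ lam₁) (Set.Ioc (phiMin k) Real.pi) ∧
      Filter.Tendsto (fun φ => grovP k φ lam₁) (nhdsWithin (phiMin k) (Set.Ioi (phiMin k)))
        (nhds 1) := by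
  have hK : (2:ℝ) ≤ (k : ℝ) := by exact_mod_cast hk
  have hπ := Real.pi_pos
  have hM : (0:ℝ) < 2 * (k:ℝ) + 1 := by linarith
  have hm : (0:ℝ) < 2 * (k:ℝ) - 1 := by linarith
  set a : ℝ := Real.pi / (2 * (k:ℝ) + 1) with ha
  set b : ℝ := Real.pi / (2 * (k:ℝ) - 1) with hb
  have hapos : 0 < a := by positivity
  have hbpos : 0 < b := by positivity
  have hab : a < b := by
    apply div_lt_div_of_pos_left hπ hm; linarith
  have hb3 : b ≤ Real.pi / 3 := by
    apply div_le_div_of_nonneg_left hπ.le (by norm_num); linarith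
  -- lam₁ = sin(b/2)^2
  have hlam : lam₁ = Real.sin (b / 2) ^ 2 := by
    rw [hlam₁]; congr 2
    rw [hb]; rw [div_div]; ring_nf
  have hb2pos : 0 < b / 2 := by linarith
  have hb2lt : b / 2 < Real.pi / 2 := by linarith
  have hl0 : 0 < lam₁ := by
    rw [hlam]
    have := Real.sin_pos_of_pos_of_lt_pi hb2pos (by linarith)
    positivity
  have hcosb2 : 0 < Real.cos (b / 2) := Real.cos_pos_of_mem_Ioo ⟨by linarith, hb2lt⟩
  have hl1 : lam₁ < 1 := by
    have h := Real.sin_sq_add_cos_sq (b / 2)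
    rw [hlam]; nlinarith
  -- 1 - cos b = 2 * lam₁
  have hkey : 1 - Real.cos b = 2 * lam₁ := by
    have h1 : Real.cos (b/2) ^ 2 = 1 / 2 + Real.cos (2 * (b/2)) / 2 := Real.cos_sq (b/2)
    have h2 : 2 * (b/2) = b := by ring
    rw [h2] at h1
    have h := Real.sin_sq_add_cos_sq (b / 2)
    rw [hlam]; linarith
  -- cos a vs cos b
  have hcosab : Real.cos b < Real.cos a := by
    apply Real.strictAntiOn_cos ⟨hapos.le, by linarith⟩ ⟨hbpos.le, by linarith⟩ hab
  have hcosa1 : Real.cos a < 1 := by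
    have : Real.cos a < Real.cos 0 :=
      Real.strictAntiOn_cos ⟨le_refl 0, hπ.le⟩ ⟨hapos.le, by linarith⟩ hapos
    simpa using this
  have hcosbge : -1 ≤ Real.cos b := Real.neg_one_le_cos b
  -- the arccos argument for phiMin
  have hmval : 1 - (2 - 2 * Real.cos a) / (1 - Real.cos b) = 1 - (1 - Real.cos a) / lam₁ := by
    rw [hkey]
    rw [show (2 - 2 * Real.cos a) = 2 * (1 - Real.cos a) by ring]
    rw [mul_div_mul_left _ _ (by norm_num : (2:ℝ) ≠ 0)]
  set m : ℝ := 1 - (1 - Real.cos a) / lam₁ with hmdef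
  have hphiMin : phiMin k = Real.arccos m := by
    rw [phiMin, ← ha, ← hb, hmval]
  have hm1 : m < 1 := by
    have : 0 < (1 - Real.cos a) / lam₁ := by
      apply div_pos (by linarith) hl0
    rw [hmdef]; linarith
  have hmneg : -1 < m := by
    have h1 : 1 - Real.cos a < 2 * lam₁ := by linarith
    have : (1 - Real.cos a) / lam₁ < 2 := by
      rw [div_lt_iff₀ hl0]; linarith
    rw [hmdef]; linarith
  have hphimin_pos : 0 < phiMin k := by rw [hphiMin]; exact Real.arccos_pos.mpr hm1
  have hphimin_lt : phiMin k < Real.pi := by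
    rw [hphiMin]
    refine lt_of_le_of_ne (Real.arccos_le_pi m) ?_
    rw [Ne, Real.arccos_eq_pi]
    linarith
  have hcosphimin : Real.cos (phiMin k) = m := by
    rw [hphiMin]; exact Real.cos_arccos hmneg.le hm1.le
  -- 1 - lam₁ * (1 - m) = cos a
  have hcm : 1 - lam₁ * (1 - m) = Real.cos a := by
    rw [hmdef]
    field_simp
    ring
  -- For φ in (phiMin, π], the δ lies in (a, b]
  have hc_lt : ∀ φ ∈ Set.Ioc (phiMin k) Real.pi,
      1 - lam₁ * (1 - Real.cos φ) < Real.cos a ∧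
      Real.cos b ≤ 1 - lam₁ * (1 - Real.cos φ) := by
    intro φ hφ
    have hcosφ : Real.cos φ < m := by
      rw [← hcosphimin]
      exact Real.strictAntiOn_cos ⟨hphimin_pos.le, hphimin_lt.le⟩
        ⟨by linarith [hφ.1], hφ.2⟩ hφ.1
    have hge : -1 ≤ Real.cos φ := Real.neg_one_le_cos φ
    constructor
    · rw [← hcm]
      have := mul_lt_mul_of_pos_left (by linarith : 1 - m < 1 - Real.cos φ) hl0
      linarith
    · have := mul_le_mul_of_nonneg_left (by linarith : 1 - Real.cos φ ≤ 2) hl0.le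
      linarith
  have hδmem : ∀ φ ∈ Set.Ioc (phiMin k) Real.pi,
      a < Real.arccos (1 - lam₁ * (1 - Real.cos φ)) ∧
      Real.arccos (1 - lam₁ * (1 - Real.cos φ)) ≤ b := by
    intro φ hφ
    obtain ⟨hlt, hge⟩ := hc_lt φ hφ
    constructor
    · have : Real.arccos (Real.cos a) < Real.arccos (1 - lam₁ * (1 - Real.cos φ)) := by
        apply Real.strictAntiOn_arccos ⟨by linarith [Real.neg_one_le_cos φ], by linarith⟩
          ⟨by linarith, by linarith⟩ hlt
      rwa [Real.arccos_cos hapos.le (by linarith)] at this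
    · have : Real.arccos (1 - lam₁ * (1 - Real.cos φ)) ≤ Real.arccos (Real.cos b) := by
        rcases eq_or_lt_of_le hge with h | h
        · rw [h]
        · exact le_of_lt (Real.strictAntiOn_arccos ⟨by linarith, by linarith⟩
            ⟨by linarith [Real.neg_one_le_cos φ], by linarith⟩ h)
      rwa [Real.arccos_cos hbpos.le (by linarith)] at this
  -- strict antitonicity
  have hanti : StrictAntiOn (fun φ => grovP k φ lam₁) (Set.Ioc (phiMin k) Real.pi) := by
    intro φ1 h1 φ2 h2 h12
    have hc1 : Real.cos φ1 < 1 := by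
      have := (hc_lt φ1 h1).1; nlinarith [hl0, (Real.neg_one_le_cos φ1)]
    have hc2 : Real.cos φ2 < 1 := by
      have := (hc_lt φ2 h2).1; nlinarith [hl0, (Real.neg_one_le_cos φ2)]
    show grovP k φ2 lam₁ < grovP k φ1 lam₁
    rw [grovP_formula k φ1 lam₁ hl0 hl1 hc1, grovP_formula k φ2 lam₁ hl0 hl1 hc2]
    set δ1 := Real.arccos (1 - lam₁ * (1 - Real.cos φ1)) with hδ1
    set δ2 := Real.arccos (1 - lam₁ * (1 - Real.cos φ2)) with hδ2
    have hδ1m := hδmem φ1 h1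
    have hδ2m := hδmem φ2 h2
    have hδ12 : δ1 < δ2 := by
      rw [hδ1, hδ2]
      have hcosφ12 : Real.cos φ2 < Real.cos φ1 :=
        Real.strictAntiOn_cos ⟨by linarith [h1.1], h1.2⟩ ⟨by linarith [h2.1], h2.2⟩ h12
      have hlt : 1 - lam₁ * (1 - Real.cos φ1) > 1 - lam₁ * (1 - Real.cos φ2) := by
        have := mul_lt_mul_of_pos_left (by linarith : 1 - Real.cos φ1 < 1 - Real.cos φ2) hl0
        linarith
      apply Real.strictAntiOn_arccos
        ⟨by linarith [(hc_lt φ2 h2).2, hcosbge], by linarith [(hc_lt φ2 h2).1, hcosa1]⟩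
        ⟨by linarith [(hc_lt φ1 h1).2, hcosbge], by linarith [(hc_lt φ1 h1).1, hcosa1]⟩ hlt
    -- rewrite the denominators via cos δ
    have e1 : 1 - lam₁ * (1 - Real.cos φ1) = Real.cos δ1 := by
      rw [hδ1, Real.cos_arccos (by linarith [(hc_lt φ1 h1).2, hcosbge])
        (by linarith [(hc_lt φ1 h1).1, hcosa1])]
    have e2 : 1 - lam₁ * (1 - Real.cos φ2) = Real.cos δ2 := by
      rw [hδ2, Real.cos_arccos (by linarith [(hc_lt φ2 h2).2, hcosbge])
        (by linarith [(hc_lt φ2 h2).1, hcosa1])]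
    rw [e1, e2]
    have hratio := ratio_strict_mono k hk (by rw [← ha]; exact hδ1m.1) hδ12
      (by rw [← hb]; exact hδ2m.2)
    have h1l : 0 < 1 - lam₁ := by linarith
    rw [mul_div_assoc, mul_div_assoc]
    have := mul_lt_mul_of_pos_left hratio h1l
    linarith
  refine ⟨hanti, ?_⟩
  -- continuity and the value at phiMin
  have hδconst : Real.arccos (1 - lam₁ * (1 - Real.cos (phiMin k))) = a := by
    rw [hcosphimin, hcm, Real.arccos_cos hapos.le (by linarith)]
  have hvalue : grovP k (phiMin k) lam₁ = 1 := by
    rw [grovP_formula k (phiMin k) lam₁ hl0 hl1 (by rw [hcosphimin]; exact hm1)]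
    rw [hδconst]
    rw [hcosphimin, hcm]
    rw [ha, mul_div_cancel₀ _ (ne_of_gt hM), Real.cos_pi]
    have : 1 + Real.cos a ≠ 0 := by
      have : -1 < Real.cos a := by
        calc -1 ≤ Real.cos b := hcosbge
        _ < Real.cos a := hcosab
      intro h; linarith
    field_simp
    ring
  have hcont : ContinuousAt (fun φ => grovP k φ lam₁) (phiMin k) := by
    have hg : Continuous (fun φ : ℝ => Real.arccos (1 - lam₁ * (1 - Real.cos φ))) := by
      exact Real.continuous_arccos.comp (by continuity)
    have hsin_ne : Real.sin (Real.arccos (1 - lam₁ * (1 - Real.cos (phiMin k)))) ^ 2 ≠ 0 := by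
      rw [hδconst]
      have := Real.sin_pos_of_pos_of_lt_pi hapos (by linarith)
      positivity
    simp only [grovP]
    apply ContinuousAt.add
    · apply ContinuousAt.mul
      · apply ContinuousAt.mul
        · exact ContinuousAt.div continuousAt_const
            (((Real.continuous_sin.comp hg).pow 2).continuousAt) hsin_ne
        · exact (Real.continuous_cos.continuousAt).sub
            ((Real.continuous_cos.comp hg).continuousAt)
      · exact (Real.continuous_cos.comp (continuous_const.mul hg)).continuousAt
    · apply ContinuousAt.mul
      · exact ContinuousAt.div continuousAt_const
          (((Real.continuous_sin.comp hg).pow 2).continuousAt) hsin_ne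
      · exact ContinuousAt.sub continuousAt_const
          ((Real.continuous_cos.continuousAt).mul
            ((Real.continuous_cos.comp hg).continuousAt))
  have := hcont.tendsto
  rw [hvalue] at this
  exact this.mono_left nhdsWithin_le_nhds
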